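/- arXiv:1204.5922 — 2 statements merged into one kernel-verified Lean document; each statement's English description precedes it below -/
import Mathlib

section
/- Let (G, ≤) be a lefthanded graph and let S ⊆ V be down-closed. Then the sets D̄_w for w ∈ μ(S) partition S, and there are no edges of G between distinct such sets. -/
open scoped Classical

/-- A tree order: whenever `w < u` and `w < v`, the elements `u` and `v` are comparable. -/
def TreeOrder (V : Type*) [PartialOrder V] : Prop :=
  ∀ w u v : V, w < u → w < v → (u ≤ v ∨ v ≤ u)

/-- A lefthanded graph with respect to the partial order on `V`. -/
def Lefthanded {V : Type*} [PartialOrder V] (G : SimpleGraph V) : Prop :=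
  TreeOrder V ∧
  (∀ u v : V, G.Adj u v → u ≤ v ∨ v ≤ u) ∧
  (∀ w u v : V, w < u → u < v → G.Adj v w → G.Adj v u)

/-- `D_v = {u : u < v}`. -/
noncomputable def Dset {V : Type*} [Fintype V] [PartialOrder V] (v : V) : Finset V :=
  Finset.univ.filter (fun u => u < v)

/-- `D̄_v = D_v ∪ {v}`. -/
noncomputable def Dbar {V : Type*} [Fintype V] [DecidableEq V] [PartialOrder V] (v : V) :
    Finset V :=
  insert v (Dset v)

/-- `N_v = {u < v : u ~ v}`. -/
noncomputable def Nset {V : Type*} [Fintype V] [PartialOrder V] (G : SimpleGraph V) (v : V) :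
    Finset V :=
  Finset.univ.filter (fun u => u < v ∧ G.Adj u v)

/-- `F_v = D_v \ N_v`. -/
noncomputable def Fset {V : Type*} [Fintype V] [DecidableEq V] [PartialOrder V]
    (G : SimpleGraph V) (v : V) : Finset V :=
  Dset v \ Nset G v

/-- `μ(U)`: the set of maximal elements of `U`. -/
noncomputable def maxElts {V : Type*} [PartialOrder V] (U : Finset V) : Finset V :=
  U.filter (fun u => ∀ w ∈ U, ¬ u < w)

/-- `I` is an independent set of `G`. -/
def IndepSet {V : Type*} (G : SimpleGraph V) (I : Finset V) : Prop :=
  ∀ u ∈ I, ∀ w ∈ I, ¬ G.Adj u w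

/-- `B(S) = Σ_{I ⊆ S, I independent} (−1)^{|I|} Π_{v∈I} p_v`. -/
noncomputable def Bfun {V : Type*} [Fintype V] (G : SimpleGraph V) (p : V → ℝ) (S : Finset V) :
    ℝ :=
  ∑ I ∈ S.powerset.filter (fun I => IndepSet G I), (-1 : ℝ) ^ I.card * ∏ v ∈ I, p v

/-- `𝔮(S) = Σ_{I ⊇ S, I independent} (−1)^{|I|−|S|} Π_{v∈I} p_v`. -/
noncomputable def qfun {V : Type*} [Fintype V] (G : SimpleGraph V) (p : V → ℝ) (S : Finset V) :
    ℝ :=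
  ∑ I ∈ Finset.univ.powerset.filter (fun I => IndepSet G I ∧ S ⊆ I),
    (-1 : ℝ) ^ (I.card - S.card) * ∏ v ∈ I, p v

/-- A down-closed set. -/
def DownClosed {V : Type*} [Fintype V] [PartialOrder V] (S : Finset V) : Prop :=
  ∀ s ∈ S, Dset s ⊆ S

lemma mem_Dbar {V : Type*} [Fintype V] [DecidableEq V] [PartialOrder V] {a w : V} :
    a ∈ Dbar w ↔ a ≤ w := by
  simp [Dbar, Dset, le_iff_lt_or_eq, or_comm]

lemma mem_maxElts {V : Type*} [PartialOrder V] {S : Finset V} {w : V} :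
    w ∈ maxElts S ↔ w ∈ S ∧ ∀ u ∈ S, ¬ w < u := by
  simp [maxElts]

theorem stmt2 {V : Type*} [Fintype V] [DecidableEq V] [PartialOrder V]
    (G : SimpleGraph V) (hG : Lefthanded G) (S : Finset V) (hS : DownClosed S) :
    ((maxElts S).biUnion (fun w => Dbar w) = S) ∧
    (∀ w ∈ maxElts S, ∀ w' ∈ maxElts S, w ≠ w' → Disjoint (Dbar w) (Dbar w')) ∧
    (∀ w ∈ maxElts S, ∀ w' ∈ maxElts S, w ≠ w' →
        ∀ a ∈ Dbar w, ∀ b ∈ Dbar w', ¬ G.Adj a b) := by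
  have hdisj : ∀ w ∈ maxElts S, ∀ w' ∈ maxElts S, w ≠ w' → Disjoint (Dbar w) (Dbar w') := by
    intro w hw w' hw' hne
    rw [mem_maxElts] at hw hw'
    rw [Finset.disjoint_left]
    intro a ha ha'
    rw [mem_Dbar] at ha ha'
    rcases lt_or_eq_of_le ha with h | h
    · rcases lt_or_eq_of_le ha' with h' | h'
      · rcases hG.1 a w w' h h' with hc | hc
        · rcases lt_or_eq_of_le hc with hc | hc
          · exact hw.2 w' hw'.1 hc
          · exact hne hc
        · rcases lt_or_eq_of_le hc with hc | hc
          · exact hw'.2 w hw.1 hc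
          · exact hne hc.symm
      · subst h'; exact hw'.2 w hw.1 h
    · subst h
      rcases lt_or_eq_of_le ha' with h' | h'
      · exact hw.2 w' hw'.1 h'
      · exact hne h'
  refine ⟨?_, hdisj, ?_⟩
  · apply Finset.Subset.antisymm
    · intro a ha
      rcases Finset.mem_biUnion.1 ha with ⟨w, hw, haw⟩
      rw [mem_maxElts] at hw
      rw [mem_Dbar] at haw
      rcases lt_or_eq_of_le haw with h | h
      · exact hS w hw.1 (by simp [Dset, h])
      · exact h ▸ hw.1
    · intro s hs
      have hne : (S.filter (fun t => s ≤ t)).Nonempty := ⟨s, by simp [hs]⟩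
      obtain ⟨m, hm, hmax'⟩ := Finset.exists_maximal hne
      have hmax : ∀ u ∈ S.filter (fun t => s ≤ t), ¬ m < u := fun u hu hlt =>
        lt_irrefl m (lt_of_lt_of_le hlt (hmax' hu hlt.le))
      rw [Finset.mem_filter] at hm
      refine Finset.mem_biUnion.2 ⟨m, mem_maxElts.2 ⟨hm.1, ?_⟩, mem_Dbar.2 hm.2⟩
      intro u hu hlt
      exact hmax u (Finset.mem_filter.2 ⟨hu, hm.2.trans hlt.le⟩) hlt
  · intro w hw w' hw' hne a ha b hb hab
    have hd := Finset.disjoint_left.1 (hdisj w hw w' hw' hne)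
    rw [mem_maxElts] at hw hw'
    rw [mem_Dbar] at ha hb
    have hcomp := hG.2.1 a b hab
    have hne' : a ≠ b := hab.ne
    rcases hcomp with h | h
    · have hab' : a < b := lt_of_le_of_ne h hne'
      rcases lt_or_eq_of_le ha with h1 | h1
      · rcases hG.1 a b w hab' h1 with hc | hc
        · exact hd (mem_Dbar.2 hc) (mem_Dbar.2 hb)
        · exact hd (mem_Dbar.2 le_rfl) (mem_Dbar.2 (hc.trans hb))
      · subst h1; exact hw.2 w' hw'.1 (lt_of_lt_of_le hab' hb)
    · have hab' : b < a := lt_of_le_of_ne h hne'.symm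
      rcases lt_or_eq_of_le hb with h1 | h1
      · rcases hG.1 b a w' hab' h1 with hc | hc
        · exact hd (mem_Dbar.2 ha) (mem_Dbar.2 hc)
        · exact hd (mem_Dbar.2 (hc.trans ha)) (mem_Dbar.2 le_rfl)
      · subst h1; exact hw'.2 w hw.1 (lt_of_lt_of_le hab' ha)
end

section
/- Let (G, ≤) be a lefthanded graph with labels p_v ∈ [0,1] such that B(S) > 0 for all S ⊆ V. Define x_v = p_v · B(F_v) / B(D_v). Then for every vertex v, x_v · Π_{u ∈ N_v} (1 − x_u) = p_v. -/
open scoped Classical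

section Helpers

variable {V : Type*} [Fintype V] [DecidableEq V] [PartialOrder V]
variable (G : SimpleGraph V) (p : V → ℝ)

lemma mem_Dset {u v : V} : u ∈ Dset v ↔ u < v := by simp [Dset]

lemma mem_Nset {u v : V} : u ∈ Nset G v ↔ u < v ∧ G.Adj u v := by simp [Nset]

lemma mem_Fset {u v : V} : u ∈ Fset G v ↔ u < v ∧ ¬ G.Adj u v := by
  simp only [Fset, Finset.mem_sdiff, mem_Dset, mem_Nset]
  tauto

lemma indepSet_subset {I J : Finset V} (h : J ⊆ I) (hI : IndepSet G I) : IndepSet G J :=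
  fun u hu w hw => hI u (h hu) w (h hw)

/-- Raw deletion identity. -/
lemma Bfun_del (S : Finset V) (z : V) (hz : z ∈ S) :
    Bfun G p S = Bfun G p (S.erase z)
      - p z * Bfun G p (S \ insert z (G.neighborFinset z)) := by
  classical
  unfold Bfun
  rw [← Finset.sum_filter_add_sum_filter_not
      (S.powerset.filter (fun I => IndepSet G I)) (fun I => z ∈ I)]
  have h1 : (S.powerset.filter (fun I => IndepSet G I)).filter (fun I => ¬ z ∈ I)
      = (S.erase z).powerset.filter (fun I => IndepSet G I) := by
    ext I
    simp only [Finset.mem_filter, Finset.mem_powerset, Finset.subset_erase]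
    tauto
  have h2 : ∑ I ∈ (S.powerset.filter (fun I => IndepSet G I)).filter (fun I => z ∈ I),
      ((-1 : ℝ) ^ I.card * ∏ v ∈ I, p v)
      = ∑ J ∈ (S \ insert z (G.neighborFinset z)).powerset.filter (fun I => IndepSet G I),
        (-(p z)) * ((-1 : ℝ) ^ J.card * ∏ v ∈ J, p v) := by
    apply Finset.sum_nbij' (fun I => I.erase z) (fun J => insert z J)
    · intro I hI
      simp only [Finset.mem_filter, Finset.mem_powerset] at hI ⊢
      obtain ⟨⟨hIS, hInd⟩, hzI⟩ := hI
      refine ⟨?_, indepSet_subset G (Finset.erase_subset z I) hInd⟩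
      intro w hw
      simp only [Finset.mem_erase] at hw
      simp only [Finset.mem_sdiff, Finset.mem_insert, SimpleGraph.mem_neighborFinset]
      refine ⟨hIS hw.2, ?_⟩
      rintro (rfl | hadj)
      · exact hw.1 rfl
      · exact hInd z hzI w hw.2 hadj
    · intro J hJ
      simp only [Finset.mem_filter, Finset.mem_powerset] at hJ ⊢
      obtain ⟨hJS, hInd⟩ := hJ
      have hzJ : z ∉ J := by
        intro h
        have := hJS h
        simp [Finset.mem_sdiff] at this
      constructor
      constructor
      · intro w hw
        rcases Finset.mem_insert.1 hw with rfl | hwJ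
        · exact hz
        · exact (Finset.mem_sdiff.1 (hJS hwJ)).1
      · intro u hu w hw hadj
        rcases Finset.mem_insert.1 hu with h1 | huJ <;>
          rcases Finset.mem_insert.1 hw with h2 | hwJ
        · subst h1; subst h2; exact G.irrefl hadj
        · subst h1
          refine ((Finset.mem_sdiff.1 (hJS hwJ)).2) (Finset.mem_insert_of_mem ?_)
          rw [SimpleGraph.mem_neighborFinset]
          exact hadj
        · subst h2
          refine ((Finset.mem_sdiff.1 (hJS huJ)).2) (Finset.mem_insert_of_mem ?_)
          rw [SimpleGraph.mem_neighborFinset]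
          exact hadj.symm
        · exact hInd u huJ w hwJ hadj
      · exact Finset.mem_insert_self z J
    · intro I hI
      simp only [Finset.mem_filter] at hI
      exact Finset.insert_erase hI.2
    · intro J hJ
      simp only [Finset.mem_filter, Finset.mem_powerset] at hJ
      have hzJ : z ∉ J := by
        intro h
        have := hJ.1 h
        simp [Finset.mem_sdiff] at this
      exact Finset.erase_insert hzJ
    · intro I hI
      simp only [Finset.mem_filter] at hI
      have hzI : z ∈ I := hI.2
      have hc : I.card = (I.erase z).card + 1 := (Finset.card_erase_add_one hzI).symm
      have hp : ∏ v ∈ I, p v = p z * ∏ v ∈ I.erase z, p v :=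
        (Finset.mul_prod_erase I p hzI).symm
      rw [hc, hp, pow_succ]
      ring
  rw [h1, h2, ← Finset.mul_sum]
  ring

/-- Deletion identity at a locally-maximal vertex. -/
lemma Bfun_del' (S : Finset V) (z : V) (hz : z ∈ S)
    (hcomp : ∀ w ∈ S, G.Adj z w → w < z) (hN : Nset G z ⊆ S) :
    Bfun G p S = Bfun G p (S.erase z) - p z * Bfun G p (S \ insert z (Nset G z)) := by
  rw [Bfun_del G p S z hz]
  have : S \ insert z (G.neighborFinset z) = S \ insert z (Nset G z) := by
    ext w
    simp only [Finset.mem_sdiff, Finset.mem_insert, SimpleGraph.mem_neighborFinset, mem_Nset]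
    constructor
    · rintro ⟨hwS, h⟩
      refine ⟨hwS, ?_⟩
      rintro (rfl | ⟨_, hadj⟩)
      · exact h (Or.inl rfl)
      · exact h (Or.inr hadj.symm)
    · rintro ⟨hwS, h⟩
      refine ⟨hwS, ?_⟩
      rintro (rfl | hadj)
      · exact h (Or.inl rfl)
      · exact h (Or.inr ⟨hcomp w hwS hadj, hadj.symm⟩)
  rw [this]

lemma Bfun_Dbar (m : V) (hG : Lefthanded G) :
    Bfun G p (Dbar m) = Bfun G p (Dset m) - p m * Bfun G p (Fset G m) := by
  have hm : m ∈ Dbar m := Finset.mem_insert_self _ _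
  have hmD : m ∉ Dset m := by simp [mem_Dset]
  have h := Bfun_del' G p (Dbar m) m hm ?_ ?_
  · have e1 : (Dbar m).erase m = Dset m := by
      rw [Dbar, Finset.erase_insert hmD]
    have e2 : Dbar m \ insert m (Nset G m) = Fset G m := by
      ext w
      simp only [Dbar, Fset, Finset.mem_sdiff, Finset.mem_insert, mem_Dset, mem_Nset]
      constructor
      · rintro ⟨(rfl | hw), h2⟩
        · exact absurd (Or.inl rfl) h2
        · exact ⟨hw, fun h3 => h2 (Or.inr h3)⟩
      · rintro ⟨hw, h2⟩
        refine ⟨Or.inr hw, ?_⟩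
        rintro (rfl | h3)
        · exact lt_irrefl _ hw
        · exact h2 h3
    rw [e1, e2] at h
    exact h
  · intro w hw hadj
    rcases Finset.mem_insert.1 hw with rfl | hw
    · exact absurd hadj (G.irrefl)
    · exact (mem_Dset).1 hw
  · intro w hw
    rw [mem_Nset] at hw
    exact Finset.mem_insert_of_mem ((mem_Dset).2 hw.1)

end Helpers

section Main

variable {V : Type*} [Fintype V] [DecidableEq V] [PartialOrder V]
variable (G : SimpleGraph V) (p : V → ℝ)

lemma dc_erase {S : Finset V} {z : V} (hS : DownClosed S) (hmax : ∀ x ∈ S, ¬ z < x) :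
    DownClosed (S.erase z) := by
  intro s hs w hw
  have hsS := Finset.mem_of_mem_erase hs
  have hwS := hS s hsS hw
  rw [mem_Dset] at hw
  refine Finset.mem_erase.2 ⟨?_, hwS⟩
  rintro rfl
  exact hmax s hsS hw

lemma dc_sdiff (hG : Lefthanded G) {S : Finset V} {z : V} (hS : DownClosed S)
    (hmax : ∀ x ∈ S, ¬ z < x) :
    DownClosed (S \ insert z (Nset G z)) := by
  intro s hs w hw
  rw [Finset.mem_sdiff] at hs
  have hwS : w ∈ S := hS s hs.1 hw
  rw [mem_Dset] at hw
  rw [Finset.mem_sdiff]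
  refine ⟨hwS, ?_⟩
  intro hmem
  rcases Finset.mem_insert.1 hmem with rfl | hwN
  · exact hmax s hs.1 hw
  · rw [mem_Nset] at hwN
    rcases hG.1 w s z hw hwN.1 with h | h
    · have hsz : s < z := lt_of_le_of_ne h
        (by rintro rfl; exact hs.2 (Finset.mem_insert_self _ _))
      have hadj : G.Adj z s := hG.2.2 w s z hw hsz hwN.2.symm
      exact hs.2 (Finset.mem_insert_of_mem ((mem_Nset G).2 ⟨hsz, hadj.symm⟩))
    · rcases eq_or_lt_of_le h with rfl | hlt
      · exact hs.2 (Finset.mem_insert_self _ _)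
      · exact hmax s hs.1 hlt

lemma lemX (hG : Lefthanded G) :
    ∀ (k : ℕ) (A : Finset V) (m : V), (A \ Dset m).card = k →
      DownClosed A → Dset m ⊆ A → (∀ a ∈ A, ¬ m ≤ a) →
      Bfun G p (A \ Nset G m) * Bfun G p (Dset m) = Bfun G p A * Bfun G p (Fset G m) := by
  intro k
  induction k using Nat.strong_induction_on with
  | _ k ih =>
    intro A m hcard hdc hDm hnm
    by_cases hAD : A \ Dset m = ∅
    · have hA : A = Dset m :=
        Finset.Subset.antisymm (Finset.sdiff_eq_empty_iff_subset.1 hAD) hDm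
      rw [hA]
      show Bfun G p (Fset G m) * _ = _
      ring
    · obtain ⟨z, hzmem, hzmax'⟩ :=
        (by obtain ⟨i, hi⟩ := Finset.exists_maximal (Finset.nonempty_iff_ne_empty.2 hAD); exact ⟨i, hi.1, fun x hx hlt => lt_irrefl _ (lt_of_lt_of_le hlt (hi.2 hx hlt.le))⟩ :
          ∃ z ∈ A \ Dset m, ∀ x ∈ A \ Dset m, ¬ z < x)
      have hzA : z ∈ A := (Finset.mem_sdiff.1 hzmem).1
      have hzD : z ∉ Dset m := (Finset.mem_sdiff.1 hzmem).2
      have hzmax : ∀ x ∈ A, ¬ z < x := by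
        intro x hx hlt
        by_cases hxD : x ∈ Dset m
        · exact hzD (mem_Dset.2 (lt_trans hlt (mem_Dset.1 hxD)))
        · exact hzmax' x (Finset.mem_sdiff.2 ⟨hx, hxD⟩) hlt
      have hND : ∀ w ∈ Nset G z, w ∉ Dset m := by
        intro w hw hwm
        rw [mem_Nset] at hw
        rw [mem_Dset] at hwm
        rcases hG.1 w z m hw.1 hwm with h | h
        · rcases eq_or_lt_of_le h with rfl | hlt
          · exact hnm z hzA le_rfl
          · exact hzD (mem_Dset.2 hlt)
        · exact hnm z hzA h
      have hNA : Nset G z ⊆ A := fun w hw => hdc z hzA (mem_Dset.2 ((mem_Nset G).1 hw).1)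
      have hcomp : ∀ w ∈ A, G.Adj z w → w < z := by
        intro w hw hadj
        rcases hG.2.1 z w hadj with h | h
        · rcases eq_or_lt_of_le h with rfl | hlt
          · exact absurd hadj G.irrefl
          · exact absurd hlt (hzmax w hw)
        · exact lt_of_le_of_ne h hadj.ne'
      have hzNm : z ∉ Nset G m := fun h => hzD (mem_Dset.2 ((mem_Nset G).1 h).1)
      have hNmD : Nset G m ⊆ Dset m := fun x hx => mem_Dset.2 ((mem_Nset G).1 hx).1
      have e1 := Bfun_del' G p A z hzA hcomp hNA
      have hzA' : z ∈ A \ Nset G m := Finset.mem_sdiff.2 ⟨hzA, hzNm⟩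
      have e2 := Bfun_del' G p (A \ Nset G m) z hzA'
        (fun w hw hadj => hcomp w (Finset.mem_sdiff.1 hw).1 hadj)
        (fun w hw => Finset.mem_sdiff.2 ⟨hNA hw, fun hc => hND w hw (hNmD hc)⟩)
      have s1 : (A \ Nset G m).erase z = A.erase z \ Nset G m := by
        ext x
        simp only [Finset.mem_erase, Finset.mem_sdiff]
        tauto
      have s2 : (A \ Nset G m) \ insert z (Nset G z)
          = (A \ insert z (Nset G z)) \ Nset G m := by
        ext x
        simp only [Finset.mem_sdiff]
        tauto
      rw [s1, s2] at e2
      -- hypotheses for A.erase z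
      have hdc1 : DownClosed (A.erase z) := dc_erase hdc hzmax
      have hDm1 : Dset m ⊆ A.erase z := by
        intro w hw
        refine Finset.mem_erase.2 ⟨?_, hDm hw⟩
        rintro rfl
        exact hzD hw
      have hnm1 : ∀ a ∈ A.erase z, ¬ m ≤ a :=
        fun a ha => hnm a (Finset.mem_of_mem_erase ha)
      have card1 : (A.erase z \ Dset m).card < k := by
        have hEq : A.erase z \ Dset m = (A \ Dset m).erase z := by
          ext x
          simp only [Finset.mem_erase, Finset.mem_sdiff]
          tauto
        rw [hEq, ← hcard]
        exact Finset.card_erase_lt_of_mem hzmem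
      have ihe := ih _ card1 (A.erase z) m rfl hdc1 hDm1 hnm1
      -- hypotheses for A \ insert z (Nset G z)
      have hsub2 : A \ insert z (Nset G z) ⊆ A.erase z := by
        intro x hx
        rw [Finset.mem_sdiff, Finset.mem_insert] at hx
        exact Finset.mem_erase.2 ⟨fun hc => hx.2 (Or.inl hc), hx.1⟩
      have hdc2 : DownClosed (A \ insert z (Nset G z)) := dc_sdiff G hG hdc hzmax
      have hDm2 : Dset m ⊆ A \ insert z (Nset G z) := by
        intro w hw
        rw [Finset.mem_sdiff, Finset.mem_insert]
        refine ⟨hDm hw, ?_⟩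
        rintro (rfl | hc)
        · exact hzD hw
        · exact hND w hc hw
      have hnm2 : ∀ a ∈ A \ insert z (Nset G z), ¬ m ≤ a :=
        fun a ha => hnm a (Finset.mem_sdiff.1 ha).1
      have card2 : ((A \ insert z (Nset G z)) \ Dset m).card < k :=
        lt_of_le_of_lt
          (Finset.card_le_card (Finset.sdiff_subset_sdiff hsub2 (Finset.Subset.refl _))) card1
      have ihz := ih _ card2 (A \ insert z (Nset G z)) m rfl hdc2 hDm2 hnm2
      calc Bfun G p (A \ Nset G m) * Bfun G p (Dset m)
          = Bfun G p (A.erase z \ Nset G m) * Bfun G p (Dset m)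
            - p z * (Bfun G p ((A \ insert z (Nset G z)) \ Nset G m) * Bfun G p (Dset m)) := by
            rw [e2]; ring
        _ = Bfun G p (A.erase z) * Bfun G p (Fset G m)
            - p z * (Bfun G p (A \ insert z (Nset G z)) * Bfun G p (Fset G m)) := by
            rw [ihe, ihz]
        _ = Bfun G p A * Bfun G p (Fset G m) := by rw [e1]; ring

end Main

section Main2

variable {V : Type*} [Fintype V] [DecidableEq V] [PartialOrder V]
variable (G : SimpleGraph V) (p : V → ℝ)

lemma claimC (hG : Lefthanded G) (v : V) :
    ∀ (k : ℕ) (T : Finset V), T.card = k → T ⊆ Nset G v →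
      (∀ u ∈ T, ∀ w ∈ Nset G v, w < u → w ∈ T) →
      Bfun G p (Fset G v ∪ T) * ∏ u ∈ T, Bfun G p (Dset u)
        = Bfun G p (Fset G v) * ∏ u ∈ T, Bfun G p (Dbar u) := by
  intro k
  induction k with
  | zero =>
    intro T hT _ _
    rw [Finset.card_eq_zero] at hT
    subst hT
    simp
  | succ k ih =>
    intro T hT hTN hdcT
    have hne : T.Nonempty := by
      rw [← Finset.card_pos, hT]; omega
    obtain ⟨m, hmT, hmmax⟩ := (by obtain ⟨i, hi⟩ := Finset.exists_maximal hne; exact ⟨i, hi.1, fun x hx hlt => lt_irrefl _ (lt_of_lt_of_le hlt (hi.2 hx hlt.le))⟩ :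
        ∃ m ∈ T, ∀ x ∈ T, ¬ m < x)
    have hmN : m < v ∧ G.Adj m v := (mem_Nset G).1 (hTN hmT)
    set S := Fset G v ∪ T with hSdef
    have hdcS : DownClosed S := by
      intro s hs w hw
      rw [mem_Dset] at hw
      rcases Finset.mem_union.1 hs with hsF | hsT
      · have hsF' := (mem_Fset G).1 hsF
        by_cases hA : G.Adj w v
        · exact absurd ((hG.2.2 w s v hw hsF'.1 hA.symm).symm) hsF'.2
        · exact Finset.mem_union_left _ ((mem_Fset G).2 ⟨lt_trans hw hsF'.1, hA⟩)
      · have hsN := (mem_Nset G).1 (hTN hsT)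
        by_cases hA : G.Adj w v
        · exact Finset.mem_union_right _
            (hdcT s hsT w ((mem_Nset G).2 ⟨lt_trans hw hsN.1, hA⟩) hw)
        · exact Finset.mem_union_left _ ((mem_Fset G).2 ⟨lt_trans hw hsN.1, hA⟩)
    have hmS : m ∈ S := Finset.mem_union_right _ hmT
    have hmmaxS : ∀ x ∈ S, ¬ m < x := by
      intro x hx hlt
      rcases Finset.mem_union.1 hx with hxF | hxT
      · have hxF' := (mem_Fset G).1 hxF
        exact hxF'.2 (hG.2.2 m x v hlt hxF'.1 hmN.2.symm).symm
      · exact hmmax x hxT hlt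
    have hDmS : Dset m ⊆ S := by
      intro w hw
      rw [mem_Dset] at hw
      by_cases hA : G.Adj w v
      · exact Finset.mem_union_right _
          (hdcT m hmT w ((mem_Nset G).2 ⟨lt_trans hw hmN.1, hA⟩) hw)
      · exact Finset.mem_union_left _ ((mem_Fset G).2 ⟨lt_trans hw hmN.1, hA⟩)
    have hcompS : ∀ w ∈ S, G.Adj m w → w < m := by
      intro w hw hadj
      rcases hG.2.1 m w hadj with h | h
      · rcases eq_or_lt_of_le h with rfl | hlt
        · exact absurd hadj G.irrefl
        · exact absurd hlt (hmmaxS w hw)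
      · exact lt_of_le_of_ne h hadj.ne'
    have hNmS : Nset G m ⊆ S := fun x hx => hDmS (mem_Dset.2 ((mem_Nset G).1 hx).1)
    have e1 := Bfun_del' G p S m hmS hcompS hNmS
    have sgen : S \ insert m (Nset G m) = S.erase m \ Nset G m := by
      ext x
      simp only [Finset.mem_sdiff, Finset.mem_insert, Finset.mem_erase]
      tauto
    rw [sgen] at e1
    -- lemX with A := S.erase m
    have hdcA : DownClosed (S.erase m) := dc_erase hdcS hmmaxS
    have hDmA : Dset m ⊆ S.erase m := by
      intro w hw
      refine Finset.mem_erase.2 ⟨?_, hDmS hw⟩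
      rintro rfl
      exact lt_irrefl _ (mem_Dset.1 hw)
    have hnmA : ∀ a ∈ S.erase m, ¬ m ≤ a := by
      intro a ha hle
      have ha' := Finset.mem_erase.1 ha
      exact hmmaxS a ha'.2 (lt_of_le_of_ne hle (Ne.symm ha'.1))
    have key := lemX G p hG _ (S.erase m) m rfl hdcA hDmA hnmA
    have hDbar := Bfun_Dbar G p m hG
    have hmF : m ∉ Fset G v := fun h => ((mem_Fset G).1 h).2 hmN.2
    have eS : S.erase m = Fset G v ∪ T.erase m := by
      ext x
      simp only [hSdef, Finset.mem_erase, Finset.mem_union]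
      constructor
      · rintro ⟨hx, h | h⟩
        · exact Or.inl h
        · exact Or.inr ⟨hx, h⟩
      · rintro (h | h)
        · exact ⟨by rintro rfl; exact hmF h, Or.inl h⟩
        · exact ⟨h.1, Or.inr h.2⟩
    have hTcard : (T.erase m).card = k := by
      rw [Finset.card_erase_of_mem hmT, hT]
      omega
    have ihT := ih (T.erase m) hTcard
      (fun x hx => hTN (Finset.mem_of_mem_erase hx))
      (by
        intro u hu w hw hlt
        refine Finset.mem_erase.2 ⟨?_, hdcT u (Finset.mem_of_mem_erase hu) w hw hlt⟩
        rintro rfl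
        exact hmmax u (Finset.mem_of_mem_erase hu) hlt)
    rw [← eS] at ihT
    have hBS : Bfun G p S * Bfun G p (Dset m)
        = Bfun G p (S.erase m) * Bfun G p (Dbar m) := by
      rw [hDbar]
      linear_combination Bfun G p (Dset m) * e1 - p m * key
    rw [← Finset.mul_prod_erase T (fun u => Bfun G p (Dset u)) hmT,
      ← Finset.mul_prod_erase T (fun u => Bfun G p (Dbar u)) hmT]
    linear_combination (∏ u ∈ T.erase m, Bfun G p (Dset u)) * hBS
      + Bfun G p (Dbar m) * ihT

end Main2

theorem stmt8 {V : Type*} [Fintype V] [DecidableEq V] [PartialOrder V]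
    (G : SimpleGraph V) (p : V → ℝ) (hp : ∀ v, 0 ≤ p v ∧ p v ≤ 1)
    (hG : Lefthanded G) (hB : ∀ S : Finset V, 0 < Bfun G p S) (v : V) :
    (p v * Bfun G p (Fset G v) / Bfun G p (Dset v)) *
      ∏ u ∈ Nset G v, (1 - p u * Bfun G p (Fset G u) / Bfun G p (Dset u)) = p v := by
  have hFN : Fset G v ∪ Nset G v = Dset v :=
    Finset.sdiff_union_of_subset (fun x hx => mem_Dset.2 ((mem_Nset G).1 hx).1)
  have key := claimC G p hG v (Nset G v).card (Nset G v) rfl (Finset.Subset.refl _)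
    (fun u _ w hw _ => hw)
  rw [hFN] at key
  have h1 : ∀ u ∈ Nset G v,
      (1 - p u * Bfun G p (Fset G u) / Bfun G p (Dset u))
        = Bfun G p (Dbar u) / Bfun G p (Dset u) := by
    intro u _
    rw [Bfun_Dbar G p u hG]
    have h0 : Bfun G p (Dset u) ≠ 0 := (hB _).ne'
    field_simp
  rw [Finset.prod_congr rfl h1, Finset.prod_div_distrib]
  have hD0 : Bfun G p (Dset v) ≠ 0 := (hB _).ne'
  have hPD : (∏ u ∈ Nset G v, Bfun G p (Dset u)) ≠ 0 :=
    (Finset.prod_pos (fun u _ => hB _)).ne'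
  field_simp
  linear_combination (-(p v)) * key
end
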